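/- Let G have m ≥ 1 edges and let β : E(G) → ℝ satisfy β_e > 0 for every edge e and Σ_{e ∈ E(G)} β_e = 1, with β_min = min_{e ∈ E(G)} β_e. If R_g is the geometric mean of the d-radii of the edges of G, then SO(G) ≤ (1/β_min)·(Σ_{e ∈ E(G)} β_e |z_e| − ∏_{e ∈ E(G)} |z_e|^{β_e}) + m·R_g. -/

import Mathlib

open Finset Real

noncomputable def dRad {V : Type*} [Fintype V] (G : SimpleGraph V) [DecidableRel G.Adj]
    (e : Sym2 V) : ℝ :=
  Sym2.lift ⟨fun u v => Real.sqrt ((G.degree u : ℝ) ^ 2 + (G.degree v : ℝ) ^ 2),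
    fun u v => by simp [add_comm]⟩ e

noncomputable def somborIndex {V : Type*} [Fintype V] [DecidableEq V] (G : SimpleGraph V)
    [DecidableRel G.Adj] : ℝ :=
  ∑ e ∈ G.edgeFinset, dRad G e

/-- If `β` assigns positive weights summing to `1` to the edges of `G`, `β_min` is the smallest
weight, and `R_g` is the geometric mean of the d-radii, then
`SO(G) ≤ (1/β_min)·(∑ β_e|z_e| − ∏ |z_e|^{β_e}) + m·R_g`. -/
theorem stmt10 {V : Type*} [Fintype V] [DecidableEq V] (G : SimpleGraph V) [DecidableRel G.Adj]
    (m : ℕ) (hm : G.edgeFinset.card = m) (h1 : 1 ≤ m)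
    (β : Sym2 V → ℝ) (hβpos : ∀ e ∈ G.edgeFinset, 0 < β e)
    (hβsum : ∑ e ∈ G.edgeFinset, β e = 1)
    (βmin : ℝ) (hlb : ∀ e ∈ G.edgeFinset, βmin ≤ β e)
    (hmem : ∃ e ∈ G.edgeFinset, β e = βmin) :
    somborIndex G ≤
      (1 / βmin) * ((∑ e ∈ G.edgeFinset, β e * dRad G e)
          - ∏ e ∈ G.edgeFinset, dRad G e ^ β e)
        + (m : ℝ) * (∏ e ∈ G.edgeFinset, dRad G e) ^ ((1 : ℝ) / m) := by
  classical
  set s := G.edgeFinset with hs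
  set a : Sym2 V → ℝ := dRad G with ha
  -- positivity of the d-radii
  have hapos : ∀ e ∈ s, 0 < a e := by
    intro e he
    induction e using Sym2.ind with
    | _ u v =>
      have hadj : G.Adj u v := by
        rw [hs, SimpleGraph.mem_edgeFinset] at he
        exact he
      have hd : 0 < G.degree u := by
        rw [G.degree_pos_iff_exists_adj]
        exact ⟨v, hadj⟩
      have hd' : (0:ℝ) < (G.degree u : ℝ) := by exact_mod_cast hd
      have hpos : (0:ℝ) < (G.degree u : ℝ) ^ 2 + (G.degree v : ℝ) ^ 2 := by positivity
      simpa [ha, dRad] using Real.sqrt_pos.mpr hpos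
  have hanneg : ∀ e ∈ s, 0 ≤ a e := fun e he => (hapos e he).le
  obtain ⟨e0, he0, he0eq⟩ := hmem
  have hβminpos : 0 < βmin := he0eq ▸ hβpos e0 he0
  have hmR : (0:ℝ) < (m:ℝ) := by exact_mod_cast h1
  have hPpos : 0 < ∏ e ∈ s, a e := Finset.prod_pos hapos
  set P : ℝ := ∏ e ∈ s, a e with hP
  set X : ℝ := P ^ ((1:ℝ)/m) with hX
  have hXpos : 0 < X := Real.rpow_pos_of_pos hPpos _
  set v : Sym2 V → ℝ := fun e => β e - βmin with hv
  have hvnneg : ∀ e ∈ s, 0 ≤ v e := fun e he => sub_nonneg.mpr (hlb e he)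
  have hvsum : ∑ e ∈ s, v e = 1 - m * βmin := by
    simp only [hv, Finset.sum_sub_distrib, hβsum, Finset.sum_const, hm, nsmul_eq_mul]
  set t : ℝ := 1 - m * βmin with ht
  have htnneg : 0 ≤ t := hvsum ▸ Finset.sum_nonneg hvnneg
  -- split the product: ∏ a^β = P^βmin * ∏ a^v
  have hsplit : ∏ e ∈ s, a e ^ β e = P ^ βmin * ∏ e ∈ s, a e ^ v e := by
    rw [← Real.finset_prod_rpow s a hanneg βmin, ← Finset.prod_mul_distrib]
    refine Finset.prod_congr rfl fun e he => ?_
    rw [← Real.rpow_add (hapos e he)]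
    ring_nf
    simp [hv]
  have hPX : P ^ βmin = X ^ ((m:ℝ) * βmin) := by
    rw [hX, ← Real.rpow_mul hPpos.le]
    congr 1
    field_simp
  -- key inequality
  have hkey : ∏ e ∈ s, a e ^ β e ≤ (m * βmin) * X + ∑ e ∈ s, v e * a e := by
    rcases eq_or_lt_of_le htnneg with ht0 | htpos
    · -- t = 0 : all weights equal βmin
      have hveq : ∀ e ∈ s, v e = 0 := by
        intro e he
        have := (Finset.sum_eq_zero_iff_of_nonneg hvnneg).mp (hvsum.trans ht0.symm)
        exact this e he
      have hmb : (m:ℝ) * βmin = 1 := by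
        have : (1:ℝ) - m * βmin = 0 := ht ▸ ht0.symm
        linarith
      have h2 : ∏ e ∈ s, a e ^ v e = 1 := by
        refine Finset.prod_eq_one fun e he => ?_
        rw [hveq e he, Real.rpow_zero]
      have h3 : ∑ e ∈ s, v e * a e = 0 := by
        refine Finset.sum_eq_zero fun e he => by rw [hveq e he, zero_mul]
      rw [hsplit, h2, h3, hPX, hmb, Real.rpow_one]
      ring_nf
      exact le_refl _
    · -- t > 0
      set Y : ℝ := ∏ e ∈ s, a e ^ (v e / t) with hY
      have hYnneg : 0 ≤ Y := Finset.prod_nonneg fun e he =>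
        Real.rpow_nonneg (hanneg e he) _
      have hYt : ∏ e ∈ s, a e ^ v e = Y ^ t := by
        rw [hY, ← Real.finset_prod_rpow s _ (fun e he => Real.rpow_nonneg (hanneg e he) _) t]
        refine Finset.prod_congr rfl fun e he => ?_
        rw [← Real.rpow_mul (hanneg e he)]
        rw [div_mul_cancel₀ _ (ne_of_gt htpos)]
      have hgm2 : X ^ ((m:ℝ) * βmin) * Y ^ t ≤ (m * βmin) * X + t * Y :=
        Real.geom_mean_le_arith_mean2_weighted
          (by positivity) htnneg hXpos.le hYnneg (by rw [ht]; ring)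
      have hgm : Y ≤ ∑ e ∈ s, (v e / t) * a e := by
        refine Real.geom_mean_le_arith_mean_weighted s _ _
          (fun e he => div_nonneg (hvnneg e he) htnneg) ?_ hanneg
        rw [← Finset.sum_div, hvsum, ht, div_self (ne_of_gt htpos)]
      have htY : t * Y ≤ ∑ e ∈ s, v e * a e := by
        calc t * Y ≤ t * ∑ e ∈ s, (v e / t) * a e := by
              exact mul_le_mul_of_nonneg_left hgm htnneg
          _ = ∑ e ∈ s, v e * a e := by
              rw [Finset.mul_sum]
              refine Finset.sum_congr rfl fun e he => ?_
              field_simp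
      calc ∏ e ∈ s, a e ^ β e = X ^ ((m:ℝ) * βmin) * Y ^ t := by rw [hsplit, hPX, hYt]
        _ ≤ (m * βmin) * X + t * Y := hgm2
        _ ≤ (m * βmin) * X + ∑ e ∈ s, v e * a e := by linarith
  -- conclude
  have hva : ∑ e ∈ s, v e * a e = (∑ e ∈ s, β e * a e) - βmin * ∑ e ∈ s, a e := by
    simp only [hv, sub_mul, Finset.sum_sub_distrib, Finset.mul_sum]
  have hfin : βmin * ∑ e ∈ s, a e ≤
      (∑ e ∈ s, β e * a e) - (∏ e ∈ s, a e ^ β e) + βmin * ((m:ℝ) * X) := by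
    have := hkey
    rw [hva] at this
    nlinarith
  have hSO : somborIndex G = ∑ e ∈ s, a e := rfl
  have h2 : (1/βmin) * ((∑ e ∈ s, β e * a e) - ∏ e ∈ s, a e ^ β e) + (m:ℝ) * X
      = ((∑ e ∈ s, β e * a e) - (∏ e ∈ s, a e ^ β e) + βmin * ((m:ℝ) * X)) / βmin := by
    field_simp
  rw [hSO]
  show ∑ e ∈ s, a e ≤ (1/βmin) * ((∑ e ∈ s, β e * a e) - ∏ e ∈ s, a e ^ β e) + (m:ℝ) * X
  rw [h2, le_div_iff₀ hβminpos]
  linarith
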